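/- The map φ : ℝ → ℝ³ given by φ(t) = (t³−3t, t⁴−4t², t⁵−10t) is a polynomial knot: it is injective and its derivative φ′(t) is nonzero for every t ∈ ℝ. -/

import Mathlib

/-- Shastri's degree-5 representation of the trefoil,
`φ(t) = (t³−3t, t⁴−4t², t⁵−10t)`, is a polynomial knot: it is injective and its
derivative is nonzero for every `t ∈ ℝ`. -/
theorem stmt_18 :
    Function.Injective (fun t : ℝ =>
      (t ^ 3 - 3 * t, t ^ 4 - 4 * t ^ 2, t ^ 5 - 10 * t)) ∧
    ∀ t : ℝ, (deriv (fun s : ℝ => s ^ 3 - 3 * s) t,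
        deriv (fun s : ℝ => s ^ 4 - 4 * s ^ 2) t,
        deriv (fun s : ℝ => s ^ 5 - 10 * s) t) ≠ ((0 : ℝ), (0 : ℝ), (0 : ℝ)) := by
  constructor
  · intro a b h
    simp only [Prod.mk.injEq] at h
    obtain ⟨h1, h2, h3⟩ := h
    by_contra hab
    have hd : a - b ≠ 0 := sub_ne_zero.mpr hab
    have e1 : a ^ 2 + a * b + b ^ 2 = 3 := by
      have h' : (a - b) * (a ^ 2 + a * b + b ^ 2 - 3) = 0 := by linear_combination h1
      rcases mul_eq_zero.mp h' with h' | h'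
      · exact absurd h' hd
      · linarith
    have e3 : a ^ 4 + a ^ 3 * b + a ^ 2 * b ^ 2 + a * b ^ 3 + b ^ 4 = 10 := by
      have h' : (a - b) * (a ^ 4 + a ^ 3 * b + a ^ 2 * b ^ 2 + a * b ^ 3 + b ^ 4 - 10) = 0 := by
        linear_combination h3
      rcases mul_eq_zero.mp h' with h' | h'
      · exact absurd h' hd
      · linarith
    have e2 : (a + b) * (a ^ 2 + b ^ 2 - 4) = 0 := by
      have h' : (a - b) * ((a + b) * (a ^ 2 + b ^ 2 - 4)) = 0 := by linear_combination h2
      rcases mul_eq_zero.mp h' with h' | h'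
      · exact absurd h' hd
      · exact h'
    rcases mul_eq_zero.mp e2 with h' | h'
    · have hb : b = -a := by linarith
      subst hb
      nlinarith [e1, e3]
    · nlinarith [e1, e3, h', sq_nonneg (a + b), sq_nonneg (a - b)]
  · intro t h
    simp only [Prod.mk.injEq] at h
    obtain ⟨h1, h2, h3⟩ := h
    have d1 : deriv (fun s : ℝ => s ^ 3 - 3 * s) t = 3 * t ^ 2 - 3 := by
      have : HasDerivAt (fun s : ℝ => s ^ 3 - 3 * s) (3 * t ^ 2 - 3) t := by
        have := ((hasDerivAt_pow 3 t).sub ((hasDerivAt_id t).const_mul 3))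
        simpa [Pi.sub_def] using this
      exact this.deriv
    have d3 : deriv (fun s : ℝ => s ^ 5 - 10 * s) t = 5 * t ^ 4 - 10 := by
      have : HasDerivAt (fun s : ℝ => s ^ 5 - 10 * s) (5 * t ^ 4 - 10) t := by
        have := ((hasDerivAt_pow 5 t).sub ((hasDerivAt_id t).const_mul 10))
        simpa [Pi.sub_def] using this
      exact this.deriv
    rw [d1] at h1
    rw [d3] at h3
    nlinarith [h1, h3]
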